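/- Consider the following successive-elimination setup. Let X be a set (of contexts), A a finite set (of actions), and f*: X × A → ℝ. For each x ∈ X fix a*(x) ∈ argmax_{a∈A} f*(x,a). For each epoch τ = 1, 2, …, let f̂_τ^a: X → ℝ and Δ_τ^a: X → ℝ≥0 be functions satisfying |f̂_τ^a(x) − f*(x,a)| ≤ Δ_τ^a(x) for all x ∈ X and a ∈ A. Define the active sets recursively by A₀(x) = A and A_τ(x) = { a ∈ A_{τ−1}(x) : f̂_τ^a(x) + Δ_τ^a(x) ≥ max_{a′ ∈ A_{τ−1}(x)} ( f̂_τ^{a′}(x) − Δ_τ^{a′}(x) ) }. Then for every epoch τ ≥ 0 and every x ∈ X, the optimal action is never eliminated: a*(x) ∈ A_τ(x). -/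
import Mathlib

open Finset

/-- in the successive-elimination framework, if every confidence
interval is valid (`|f̂_τ^a(x) − f*(x,a)| ≤ Δ_τ^a(x)` for all epochs `τ ≥ 1`), and the
active sets satisfy `A₀(x) = A` and
`A_τ(x) = {a ∈ A_{τ-1}(x) : f̂_τ^a(x) + Δ_τ^a(x) ≥ max_{a' ∈ A_{τ-1}(x)} (f̂_τ^{a'}(x) − Δ_τ^{a'}(x))}`,
then the optimal action `a*(x)` is never eliminated: `a*(x) ∈ A_τ(x)` for all `τ` and `x`. -/
theorem optimal_action_never_eliminated
    {X : Type*} {A : Type*} [Fintype A] [DecidableEq A]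
    (fstar : X → A → ℝ) (astar : X → A)
    (hastar : ∀ x a, fstar x a ≤ fstar x (astar x))
    (fhat : ℕ → A → X → ℝ) (Δ : ℕ → A → X → ℝ)
    (hΔ : ∀ τ, 1 ≤ τ → ∀ a x, 0 ≤ Δ τ a x)
    (hvalid : ∀ τ, 1 ≤ τ → ∀ a x, |fhat τ a x - fstar x a| ≤ Δ τ a x)
    (Asets : ℕ → X → Finset A)
    (hA0 : ∀ x, Asets 0 x = Finset.univ)
    (hAstep : ∀ τ x a, a ∈ Asets (τ + 1) x ↔
      a ∈ Asets τ x ∧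
        ∀ a' ∈ Asets τ x,
          fhat (τ + 1) a' x - Δ (τ + 1) a' x ≤ fhat (τ + 1) a x + Δ (τ + 1) a x) :
    ∀ τ x, astar x ∈ Asets τ x := by
  intro τ
  induction τ with
  | zero => intro x; rw [hA0]; exact Finset.mem_univ _
  | succ τ ih =>
      intro x
      rw [hAstep]
      refine ⟨ih x, fun a' _ => ?_⟩
      have h1 := abs_le.mp (hvalid (τ + 1) (Nat.le_add_left 1 τ) a' x)
      have h2 := abs_le.mp (hvalid (τ + 1) (Nat.le_add_left 1 τ) (astar x) x)
      have := hastar x a'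
      linarith [h1.1, h2.2]
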